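/- Let p,q ≥ 1 and n = p+q. Let Q₁ be the subgroup of GL_n(ℝ) consisting of invertible matrices whose first row is (g₁₁, 0, …, 0). Then for every g ∈ GL_n(ℝ) there exist λ ∈ {0,1,2}, h ∈ Q₁, and k ∈ O(p,q) such that h·g·k = I_n + λ·E_{1,n}, where E_{1,n} is the matrix with 1 in position (1,n) and 0 elsewhere. -/

import Mathlib

open Matrix

/-- The matrix `I_{p,q} = diag(1,…,1,-1,…,-1)` with `p` ones and `q` minus ones. -/
noncomputable def Ipq (p q : ℕ) : Matrix (Fin (p + q)) (Fin (p + q)) ℝ :=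
  Matrix.diagonal fun i => if (i : ℕ) < p then (1 : ℝ) else -1

/-- Membership in `O(p,q)`. -/
def inOpq (p q : ℕ) (k : Matrix (Fin (p + q)) (Fin (p + q)) ℝ) : Prop :=
  kᵀ * Ipq p q * k = Ipq p q

lemma lemA (m : ℕ) (v : EuclideanSpace ℝ (Fin m)) (j₀ : Fin m) :
    ∃ U : Matrix (Fin m) (Fin m) ℝ, Uᵀ * U = 1 ∧
      ∀ j, (∑ i, v i * U i j) = if j = j₀ then Real.sqrt (∑ i, v i ^ 2) else 0 := by
  by_cases hv : v = 0
  · refine ⟨1, by simp, fun j => ?_⟩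
    subst hv
    simp
  · have hvn : ‖v‖ ≠ 0 := norm_ne_zero_iff.2 hv
    have hcard : Module.finrank ℝ (EuclideanSpace ℝ (Fin m)) = Fintype.card (Fin m) := by
      simp
    have horth : Orthonormal ℝ (({j₀} : Set (Fin m)).restrict
        (fun _ : Fin m => (‖v‖⁻¹ : ℝ) • v)) := by
      constructor
      · intro i
        change ‖(‖v‖⁻¹ : ℝ) • v‖ = 1
        simp [norm_smul, inv_mul_cancel₀ hvn]
      · intro i j hij
        exact absurd (Subtype.ext ((Set.eq_of_mem_singleton i.2).trans
          (Set.eq_of_mem_singleton j.2).symm)) hij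
    obtain ⟨b, hb⟩ := horth.exists_orthonormalBasis_extension_of_card_eq hcard
    have hb0 : b j₀ = (‖v‖⁻¹ : ℝ) • v := hb j₀ rfl
    have hnorm : ‖v‖ = Real.sqrt (∑ i, v i ^ 2) := by
      rw [EuclideanSpace.norm_eq]
      congr 1
      refine Finset.sum_congr rfl fun i _ => ?_
      rw [Real.norm_eq_abs, sq_abs]
    refine ⟨fun i j => b j i, ?_, ?_⟩
    · ext j k
      have := b.orthonormal
      rw [orthonormal_iff_ite] at this
      have h := this j k
      simp only [Matrix.mul_apply, Matrix.transpose_apply, Matrix.one_apply]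
      rw [← h]
      simp [PiLp.inner_apply, RCLike.inner_apply, mul_comm]
      rfl
    · intro j
      have hinner : (∑ i, v i * b j i) = inner ℝ v (b j) := by
        simp [PiLp.inner_apply, RCLike.inner_apply, mul_comm]
      rw [hinner]
      by_cases hj : j = j₀
      · subst hj
        rw [hb0, real_inner_smul_right, real_inner_self_eq_norm_sq]
        rw [if_pos rfl, ← hnorm]
        field_simp
      · rw [if_neg hj]
        have : v = ‖v‖ • b j₀ := by rw [hb0, smul_smul, mul_inv_cancel₀ hvn, one_smul]
        rw [this, real_inner_smul_left]
        have := b.orthonormal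
        rw [orthonormal_iff_ite] at this
        rw [this j₀ j, if_neg (Ne.symm hj), mul_zero]


lemma lemB (a b : ℝ) (ha : 0 ≤ a) (hb : 0 ≤ b) (hab : ¬(a = 0 ∧ b = 0)) :
    ∃ α β c lam : ℝ, lam ∈ ({0, 1, 2} : Set ℝ) ∧ α ^ 2 - β ^ 2 = 1 ∧ c ≠ 0 ∧
      a * α + b * β = c ∧ a * β + b * α = lam * c := by
  rcases lt_trichotomy a b with h | h | h
  · -- b > a, lam = 2
    have hm : (0:ℝ) < b ^ 2 - a ^ 2 := by nlinarith
    set m := Real.sqrt (b ^ 2 - a ^ 2) with hmdef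
    have hm0 : 0 < m := Real.sqrt_pos.2 hm
    have hm2 : m ^ 2 = b ^ 2 - a ^ 2 := Real.sq_sqrt hm.le
    have h3 : Real.sqrt 3 ^ 2 = 3 := Real.sq_sqrt (by norm_num)
    have h3' : Real.sqrt 3 ≠ 0 := by positivity
    refine ⟨(m / Real.sqrt 3) * (2 * b - a) / m ^ 2, (m / Real.sqrt 3) * (b - 2 * a) / m ^ 2,
      m / Real.sqrt 3, 2, by simp, ?_, ?_, ?_, ?_⟩
    · field_simp
      linear_combination (-3)*hm2 + (-m^2)*h3
    · positivity
    · field_simp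
      linear_combination -hm2
    · field_simp
      linear_combination (-2)*hm2
  · -- a = b, lam = 1
    have ha0 : a ≠ 0 := by rintro rfl; exact hab ⟨rfl, h.symm⟩
    exact ⟨1, 0, a, 1, by simp, by norm_num, ha0, by ring, by rw [← h]; ring⟩
  · -- a > b, lam = 0
    have hm : (0:ℝ) < a ^ 2 - b ^ 2 := by nlinarith
    set m := Real.sqrt (a ^ 2 - b ^ 2) with hmdef
    have hm0 : 0 < m := Real.sqrt_pos.2 hm
    have hm2 : m ^ 2 = a ^ 2 - b ^ 2 := Real.sq_sqrt hm.le
    refine ⟨a / m, -(b / m), m, 0, by simp, ?_, hm0.ne', ?_, ?_⟩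
    · field_simp
      linear_combination -hm2
    · field_simp
      linear_combination -hm2
    · field_simp
      ring



lemma diagE {n : Type*} [Fintype n] [DecidableEq n] (d : n → ℝ) (a b : n) :
    Matrix.diagonal d * single a b (1:ℝ) = d a • single a b 1 := by
  ext i j
  rw [Matrix.diagonal_mul, Matrix.smul_apply]
  by_cases hi : i = a
  · subst hi; rfl
  · have hz : single a b (1:ℝ) i j = 0 :=
      Matrix.single_apply_of_ne a b 1 i j (by rintro ⟨h1, -⟩; exact hi h1.symm)
    rw [hz, mul_zero, smul_zero]

lemma EdiagE {n : Type*} [Fintype n] [DecidableEq n] (d : n → ℝ) (a b : n) :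
    single a b (1:ℝ) * Matrix.diagonal d = d b • single a b 1 := by
  ext i j
  rw [Matrix.mul_diagonal, Matrix.smul_apply]
  by_cases hj : j = b
  · subst hj; rw [smul_eq_mul, mul_comm]
  · have hz : single a b (1:ℝ) i j = 0 :=
      Matrix.single_apply_of_ne a b 1 i j (by rintro ⟨-, h2⟩; exact hj h2.symm)
    rw [hz, zero_mul, smul_zero]

lemma Etrans {n : Type*} [DecidableEq n] (a b : n) :
    (single a b (1:ℝ))ᵀ = single b a 1 := by
  ext i j
  by_cases h1 : a = j <;> by_cases h2 : b = i <;>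
    simp [Matrix.transpose_apply, Matrix.single, h1, h2]

lemma lemK2 (p q : ℕ) (i0 iL : Fin (p + q)) (hne : i0 ≠ iL)
    (h0 : ((i0 : ℕ) < p)) (hL : ¬((iL : ℕ) < p)) (α β : ℝ) (hαβ : α ^ 2 - β ^ 2 = 1) :
    inOpq p q (1 + (α - 1) • single i0 i0 (1:ℝ) + β • single i0 iL 1
      + β • single iL i0 1 + (α - 1) • single iL iL 1) := by
  set A := single i0 i0 (1:ℝ) with hA
  set B := single i0 iL (1:ℝ) with hB
  set C := single iL i0 (1:ℝ) with hC
  set Dm := single iL iL (1:ℝ) with hDm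
  have hd0 : (if (i0:ℕ) < p then (1:ℝ) else -1) = 1 := if_pos h0
  have hdL : (if (iL:ℕ) < p then (1:ℝ) else -1) = -1 := if_neg hL
  have hDA : Ipq p q * A = A := by rw [hA, Ipq, diagE, hd0, one_smul]
  have hDB : Ipq p q * B = B := by rw [hB, Ipq, diagE, hd0, one_smul]
  have hDC : Ipq p q * C = -C := by rw [hC, Ipq, diagE, hdL, neg_one_smul]
  have hDD : Ipq p q * Dm = -Dm := by rw [hDm, Ipq, diagE, hdL, neg_one_smul]
  have hAA : A * A = A := by rw [hA, Matrix.single_mul_single_same, one_mul]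
  have hAB : A * B = B := by rw [hA, hB, Matrix.single_mul_single_same, one_mul]
  have hAC : A * C = 0 := Matrix.single_mul_single_of_ne _ _ _ _ hne _
  have hAD : A * Dm = 0 := Matrix.single_mul_single_of_ne _ _ _ _ hne _
  have hBA : B * A = 0 := Matrix.single_mul_single_of_ne _ _ _ _ (Ne.symm hne) _
  have hBB : B * B = 0 := Matrix.single_mul_single_of_ne _ _ _ _ (Ne.symm hne) _
  have hBC : B * C = A := by rw [hB, hC, Matrix.single_mul_single_same, one_mul]
  have hBD : B * Dm = B := by rw [hB, hDm, Matrix.single_mul_single_same, one_mul]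
  have hCA : C * A = C := by rw [hC, hA, Matrix.single_mul_single_same, one_mul]
  have hCB : C * B = Dm := by rw [hC, hB, Matrix.single_mul_single_same, one_mul]
  have hCC : C * C = 0 := Matrix.single_mul_single_of_ne _ _ _ _ hne _
  have hCD : C * Dm = 0 := Matrix.single_mul_single_of_ne _ _ _ _ hne _
  have hDmA : Dm * A = 0 := Matrix.single_mul_single_of_ne _ _ _ _ (Ne.symm hne) _
  have hDmB : Dm * B = 0 := Matrix.single_mul_single_of_ne _ _ _ _ (Ne.symm hne) _
  have hDmC : C * A = C := by rw [hC, hA, Matrix.single_mul_single_same, one_mul]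
  have hDC2 : Dm * C = C := by rw [hDm, hC, Matrix.single_mul_single_same, one_mul]
  have hDD2 : Dm * Dm = Dm := by rw [hDm, Matrix.single_mul_single_same, one_mul]
  have hAI : A * Ipq p q = A := by rw [hA, Ipq, EdiagE, hd0, one_smul]
  have hBI : B * Ipq p q = -B := by rw [hB, Ipq, EdiagE, hdL, neg_one_smul]
  have hCI : C * Ipq p q = C := by rw [hC, Ipq, EdiagE, hd0, one_smul]
  have hDI : Dm * Ipq p q = -Dm := by rw [hDm, Ipq, EdiagE, hdL, neg_one_smul]
  have hTA : Aᵀ = A := by rw [hA, Etrans]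
  have hTB : Bᵀ = C := by rw [hB, hC, Etrans]
  have hTC : Cᵀ = B := by rw [hC, hB, Etrans]
  have hTD : Dmᵀ = Dm := by rw [hDm, Etrans]
  unfold inOpq
  rw [Matrix.transpose_add, Matrix.transpose_add, Matrix.transpose_add, Matrix.transpose_add,
    Matrix.transpose_one, Matrix.transpose_smul, Matrix.transpose_smul, Matrix.transpose_smul,
    Matrix.transpose_smul, hTA, hTB, hTC, hTD]
  rw [mul_assoc]
  simp only [mul_add, add_mul, Matrix.smul_mul, Matrix.mul_smul, hDA, hDB, hDC, hDD,
    hAA, hAB, hAC, hAD, hBA, hBB, hBC, hBD, hCA, hCB, hCC, hCD, hDmA, hDmB, hDC2, hDD2, hAI, hBI, hCI, hDI,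
    one_mul, mul_one, smul_zero, mul_zero, zero_mul, smul_neg, mul_neg, neg_zero, add_zero,
    zero_add, smul_smul]
  match_scalars <;> first
    | ring1
    | linear_combination hαβ
    | linear_combination -hαβ

lemma IpqBlock (p q : ℕ) : Ipq p q = Matrix.reindex finSumFinEquiv finSumFinEquiv
    (Matrix.fromBlocks (1 : Matrix (Fin p) (Fin p) ℝ) 0 0 (-1 : Matrix (Fin q) (Fin q) ℝ)) := by
  ext i j
  obtain ⟨x, rfl⟩ := finSumFinEquiv.surjective i
  obtain ⟨y, rfl⟩ := finSumFinEquiv.surjective j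
  rw [Matrix.reindex_apply, Matrix.submatrix_apply, Equiv.symm_apply_apply, Equiv.symm_apply_apply]
  rcases x with x | x <;> rcases y with y | y
  · by_cases hxy : x = y
    · subst hxy
      simp [Ipq, Matrix.diagonal_apply_eq, Matrix.one_apply_eq, x.isLt]
    · have hxy' : (x : ℕ) ≠ (y : ℕ) := fun hv => hxy (Fin.ext hv)
      rw [Ipq, Matrix.diagonal_apply_ne _ (by simp [Equiv.apply_eq_iff_eq, Fin.ext_iff]; omega),
        Matrix.fromBlocks_apply₁₁, Matrix.one_apply_ne hxy]
  · rw [Ipq, Matrix.diagonal_apply_ne _ (by simp [Equiv.apply_eq_iff_eq, Fin.ext_iff]; omega),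
      Matrix.fromBlocks_apply₁₂, Matrix.zero_apply]
  · rw [Ipq, Matrix.diagonal_apply_ne _ (by simp [Equiv.apply_eq_iff_eq, Fin.ext_iff]; omega),
      Matrix.fromBlocks_apply₂₁, Matrix.zero_apply]
  · by_cases hxy : x = y
    · subst hxy
      have : ¬ ((finSumFinEquiv (Sum.inr x) : Fin (p+q)) : ℕ) < p := by simp
      simp [Ipq, Matrix.diagonal_apply_eq, this]
    · have hxy' : (x : ℕ) ≠ (y : ℕ) := fun hv => hxy (Fin.ext hv)
      rw [Ipq, Matrix.diagonal_apply_ne _ (by simp [Equiv.apply_eq_iff_eq, Fin.ext_iff]; omega),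
        Matrix.fromBlocks_apply₂₂, Matrix.neg_apply, Matrix.one_apply_ne hxy, neg_zero]

lemma lemK1 (p q : ℕ) (hp : 1 ≤ p) (hq : 1 ≤ q) (w : Fin (p+q) → ℝ) :
    ∃ (k₁ : Matrix (Fin (p+q)) (Fin (p+q)) ℝ) (a b : ℝ), 0 ≤ a ∧ 0 ≤ b ∧
      inOpq p q k₁ ∧
      (∀ j, (∑ i, w i * k₁ i j) =
        if j = (⟨0, by have := hp; omega⟩ : Fin (p+q)) then a
        else if j = (⟨p+q-1, by have := hp; omega⟩ : Fin (p+q)) then b else 0) ∧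
      (a = 0 → b = 0 → ∀ i, w i = 0) := by
  set vp : EuclideanSpace ℝ (Fin p) := WithLp.toLp 2 (fun i => w (finSumFinEquiv (Sum.inl i))) with hvp
  set vq : EuclideanSpace ℝ (Fin q) := WithLp.toLp 2 (fun i => w (finSumFinEquiv (Sum.inr i))) with hvq
  obtain ⟨U, hU, hUact⟩ := lemA p vp ⟨0, hp⟩
  obtain ⟨V, hV, hVact⟩ := lemA q vq ⟨q-1, by omega⟩
  set X : Matrix (Fin p ⊕ Fin q) (Fin p ⊕ Fin q) ℝ := Matrix.fromBlocks U 0 0 V with hX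
  set k₁ : Matrix (Fin (p+q)) (Fin (p+q)) ℝ :=
    Matrix.reindex finSumFinEquiv finSumFinEquiv X with hk₁
  have hXblock : Xᵀ * (Matrix.fromBlocks (1 : Matrix (Fin p) (Fin p) ℝ) 0 0
      (-1 : Matrix (Fin q) (Fin q) ℝ)) * X
      = Matrix.fromBlocks 1 0 0 (-1) := by
    rw [hX, Matrix.fromBlocks_transpose, Matrix.fromBlocks_multiply, Matrix.fromBlocks_multiply]
    simp [hU, hV, Matrix.neg_mul, Matrix.mul_neg]
  have hOpq : inOpq p q k₁ := by
    unfold inOpq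
    rw [IpqBlock, hk₁]
    rw [show (Matrix.reindex finSumFinEquiv finSumFinEquiv X)ᵀ
        = Matrix.reindex finSumFinEquiv finSumFinEquiv Xᵀ from Matrix.transpose_reindex _ _ _]
    rw [← Matrix.reindexAlgEquiv_apply (R := ℝ), ← Matrix.reindexAlgEquiv_apply (R := ℝ),
      ← Matrix.reindexAlgEquiv_apply (R := ℝ), ← _root_.map_mul, ← _root_.map_mul, hXblock]
  have hkapp : ∀ x z, k₁ (finSumFinEquiv x) (finSumFinEquiv z) = X x z := by
    intro x z
    rw [hk₁, Matrix.reindex_apply, Matrix.submatrix_apply, Equiv.symm_apply_apply,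
      Equiv.symm_apply_apply]
  have key : ∀ z : Fin p ⊕ Fin q, (∑ i, w i * k₁ i (finSumFinEquiv z)) =
      Sum.elim (fun j' => ∑ i', vp i' * U i' j') (fun j' => ∑ i', vq i' * V i' j') z := by
    intro z
    rw [← Equiv.sum_comp finSumFinEquiv (fun i => w i * k₁ i (finSumFinEquiv z)),
      Fintype.sum_sum_type]
    cases z with
    | inl j' =>
      simp only [hkapp, Sum.elim_inl]
      rw [show (∑ y : Fin q, w (finSumFinEquiv (Sum.inr y)) * X (Sum.inr y) (Sum.inl j')) = 0
        from Finset.sum_eq_zero fun y _ => by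
          rw [hX, Matrix.fromBlocks_apply₂₁, Matrix.zero_apply, mul_zero], add_zero]
      exact Finset.sum_congr rfl fun x _ => by rw [hX, Matrix.fromBlocks_apply₁₁]
    | inr j' =>
      simp only [hkapp, Sum.elim_inr]
      rw [show (∑ x : Fin p, w (finSumFinEquiv (Sum.inl x)) * X (Sum.inl x) (Sum.inr j')) = 0
        from Finset.sum_eq_zero fun x _ => by
          rw [hX, Matrix.fromBlocks_apply₁₂, Matrix.zero_apply, mul_zero], zero_add]
      exact Finset.sum_congr rfl fun y _ => by rw [hX, Matrix.fromBlocks_apply₂₂]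
  refine ⟨k₁, Real.sqrt (∑ i, vp i ^ 2), Real.sqrt (∑ i, vq i ^ 2),
    Real.sqrt_nonneg _, Real.sqrt_nonneg _, hOpq, ?_, ?_⟩
  · intro j
    obtain ⟨z, rfl⟩ := finSumFinEquiv.surjective j
    rw [key]
    cases z with
    | inl j' =>
      rw [Sum.elim_inl, hUact]
      have h1 : (finSumFinEquiv (Sum.inl j') = (⟨0, by have := hp; omega⟩ : Fin (p+q)))
          ↔ j' = (⟨0, hp⟩ : Fin p) := by
        rw [Fin.ext_iff, Fin.ext_iff]
        simp
      have h2 : finSumFinEquiv (Sum.inl j') ≠ (⟨p+q-1, by have := hp; omega⟩ : Fin (p+q)) := by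
        rw [Ne, Fin.ext_iff]
        simp only [finSumFinEquiv_apply_left, Fin.coe_castAdd]
        have := j'.isLt
        omega
      by_cases hj : j' = (⟨0, hp⟩ : Fin p)
      · rw [if_pos hj, if_pos (h1.2 hj)]
      · rw [if_neg hj, if_neg (fun hc => hj (h1.1 hc)), if_neg h2]
    | inr j' =>
      rw [Sum.elim_inr, hVact]
      have h3 : finSumFinEquiv (Sum.inr j') ≠ (⟨0, by have := hp; omega⟩ : Fin (p+q)) := by
        rw [Ne, Fin.ext_iff]
        simp only [finSumFinEquiv_apply_right, Fin.coe_natAdd]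
        omega
      have h4 : (finSumFinEquiv (Sum.inr j') = (⟨p+q-1, by have := hp; omega⟩ : Fin (p+q)))
          ↔ j' = (⟨q-1, by omega⟩ : Fin q) := by
        rw [Fin.ext_iff, Fin.ext_iff]
        simp only [finSumFinEquiv_apply_right, Fin.coe_natAdd]
        have := j'.isLt
        omega
      rw [if_neg h3]
      by_cases hj : j' = (⟨q-1, by omega⟩ : Fin q)
      · rw [if_pos hj, if_pos (h4.2 hj)]
      · rw [if_neg hj, if_neg (fun hc => hj (h4.1 hc))]
  · intro ha hb i
    have hzp : ∀ i', vp i' = 0 := by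
      have hs : (∑ i, vp i ^ 2) = 0 :=
        le_antisymm (Real.sqrt_eq_zero'.1 ha) (Finset.sum_nonneg fun i _ => sq_nonneg _)
      intro i'
      have := (Finset.sum_eq_zero_iff_of_nonneg (fun i _ => sq_nonneg (vp i))).1 hs i'
        (Finset.mem_univ _)
      exact pow_eq_zero_iff (by norm_num) |>.1 this
    have hzq : ∀ i', vq i' = 0 := by
      have hs : (∑ i, vq i ^ 2) = 0 :=
        le_antisymm (Real.sqrt_eq_zero'.1 hb) (Finset.sum_nonneg fun i _ => sq_nonneg _)
      intro i'
      have := (Finset.sum_eq_zero_iff_of_nonneg (fun i _ => sq_nonneg (vq i))).1 hs i'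
        (Finset.mem_univ _)
      exact pow_eq_zero_iff (by norm_num) |>.1 this
    obtain ⟨z, rfl⟩ := finSumFinEquiv.surjective i
    cases z with
    | inl j' => exact hzp j'
    | inr j' => exact hzq j'


lemma inOpq_mul (p q : ℕ) {k₁ k₂ : Matrix (Fin (p + q)) (Fin (p + q)) ℝ}
    (h₁ : inOpq p q k₁) (h₂ : inOpq p q k₂) : inOpq p q (k₁ * k₂) := by
  unfold inOpq at *
  rw [Matrix.transpose_mul]
  calc k₂ᵀ * k₁ᵀ * Ipq p q * (k₁ * k₂) = k₂ᵀ * (k₁ᵀ * Ipq p q * k₁) * k₂ := by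
        simp only [mul_assoc]
    _ = k₂ᵀ * Ipq p q * k₂ := by rw [h₁, mul_assoc]
    _ = Ipq p q := h₂

lemma isUnit_of_inOpq (p q : ℕ) {k : Matrix (Fin (p + q)) (Fin (p + q)) ℝ}
    (h : inOpq p q k) : IsUnit k := by
  have hIne : (Ipq p q).det ≠ 0 := by
    rw [Ipq, Matrix.det_diagonal]
    rw [Finset.prod_ne_zero_iff]
    intro i _
    split_ifs <;> norm_num
  have hdet := congrArg Matrix.det h
  rw [Matrix.det_mul, Matrix.det_mul, Matrix.det_transpose] at hdet
  have hk : k.det ≠ 0 := by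
    intro h0
    rw [h0] at hdet
    simp only [mul_zero, zero_mul] at hdet
    exact hIne hdet.symm
  exact (Matrix.isUnit_iff_isUnit_det k).2 (isUnit_iff_ne_zero.2 hk)

theorem stmt_6 (p q : ℕ) (hp : 1 ≤ p) (hq : 1 ≤ q) (g : GL (Fin (p + q)) ℝ) :
    ∃ lam : ℝ, lam ∈ ({0, 1, 2} : Set ℝ) ∧
      ∃ h : Matrix (Fin (p + q)) (Fin (p + q)) ℝ, IsUnit h ∧
        (∀ j : Fin (p + q), j ≠ ⟨0, by omega⟩ → h ⟨0, by omega⟩ j = 0) ∧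
        ∃ k : Matrix (Fin (p + q)) (Fin (p + q)) ℝ, inOpq p q k ∧
          h * (g : Matrix (Fin (p + q)) (Fin (p + q)) ℝ) * k =
            1 + lam • Matrix.single ⟨0, by omega⟩ ⟨p + q - 1, by omega⟩ (1 : ℝ) := by
  set i0 : Fin (p + q) := ⟨0, by omega⟩ with hi0
  set iL : Fin (p + q) := ⟨p + q - 1, by omega⟩ with hiL
  have hne : i0 ≠ iL := by
    rw [Ne, Fin.ext_iff, hi0, hiL]
    simp
    omega
  have h0p : ((i0 : ℕ) < p) := by rw [hi0]; exact hp
  have hLp : ¬((iL : ℕ) < p) := by rw [hiL]; simp; omega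
  set G : Matrix (Fin (p + q)) (Fin (p + q)) ℝ := (g : Matrix (Fin (p + q)) (Fin (p + q)) ℝ)
    with hG
  set w : Fin (p + q) → ℝ := fun i => G i0 i with hw
  obtain ⟨k₁, a, b, ha, hb, hk₁O, hk₁act, hzero⟩ := lemK1 p q hp hq w
  have hab : ¬(a = 0 ∧ b = 0) := by
    rintro ⟨ha0, hb0⟩
    have hwz := hzero ha0 hb0
    have hone : (G * (↑g⁻¹ : Matrix (Fin (p + q)) (Fin (p + q)) ℝ)) i0 i0 = 1 := by
      rw [hG, ← Units.val_mul, mul_inv_cancel]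
      rfl
    rw [Matrix.mul_apply] at hone
    have : (∑ i, G i0 i * (↑g⁻¹ : Matrix (Fin (p + q)) (Fin (p + q)) ℝ) i i0) = 0 :=
      Finset.sum_eq_zero fun i _ => by rw [show G i0 i = 0 from hwz i, zero_mul]
    rw [this] at hone
    exact zero_ne_one hone
  obtain ⟨α, β, c, lam, hlam, hαβ, hc, hact1, hact2⟩ := lemB a b ha hb hab
  set k₂ : Matrix (Fin (p + q)) (Fin (p + q)) ℝ :=
    1 + (α - 1) • single i0 i0 (1:ℝ) + β • single i0 iL 1
      + β • single iL i0 1 + (α - 1) • single iL iL 1 with hk₂def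
  have hk₂O : inOpq p q k₂ := lemK2 p q i0 iL hne h0p hLp α β hαβ
  have hk₂0 : ∀ j, k₂ i0 j = if j = i0 then α else if j = iL then β else 0 := by
    intro j
    by_cases hj0 : j = i0
    · subst hj0
      simp [hk₂def, Matrix.add_apply, Matrix.smul_apply, Matrix.one_apply,
        Matrix.single, Matrix.of_apply, hne, Ne.symm hne]
      try ring
    · by_cases hjL : j = iL
      · subst hjL
        simp [hk₂def, Matrix.add_apply, Matrix.smul_apply, Matrix.one_apply,
          Matrix.single, Matrix.of_apply, hne, Ne.symm hne]
        try ring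
      · simp [hk₂def, Matrix.add_apply, Matrix.smul_apply, Matrix.one_apply,
          Matrix.single, Matrix.of_apply, hne, Ne.symm hne,
          Ne.symm hj0, Ne.symm hjL, hj0, hjL]
  have hk₂L : ∀ j, k₂ iL j = if j = i0 then β else if j = iL then α else 0 := by
    intro j
    by_cases hj0 : j = i0
    · subst hj0
      simp [hk₂def, Matrix.add_apply, Matrix.smul_apply, Matrix.one_apply,
        Matrix.single, Matrix.of_apply, hne, Ne.symm hne]
      try ring
    · by_cases hjL : j = iL
      · subst hjL
        simp [hk₂def, Matrix.add_apply, Matrix.smul_apply, Matrix.one_apply,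
          Matrix.single, Matrix.of_apply, hne, Ne.symm hne]
        try ring
      · simp [hk₂def, Matrix.add_apply, Matrix.smul_apply, Matrix.one_apply,
          Matrix.single, Matrix.of_apply, hne, Ne.symm hne,
          Ne.symm hj0, Ne.symm hjL, hj0, hjL]
  set M : Matrix (Fin (p + q)) (Fin (p + q)) ℝ := G * k₁ * k₂ with hM
  have hMrow : ∀ j, M i0 j = if j = i0 then c else if j = iL then lam * c else 0 := by
    intro j
    have h1 : ∀ m, (G * k₁) i0 m = if m = i0 then a else if m = iL then b else 0 := by
      intro m
      rw [Matrix.mul_apply]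
      exact hk₁act m
    rw [hM, Matrix.mul_apply]
    have step : ∀ m : Fin (p + q), (G * k₁) i0 m * k₂ m j =
        (if m = i0 then a * k₂ i0 j else 0) + (if m = iL then b * k₂ iL j else 0) := by
      intro m
      rw [h1 m]
      by_cases hm0 : m = i0
      · subst hm0
        rw [if_pos rfl, if_pos rfl, if_neg hne, add_zero]
      · by_cases hmL : m = iL
        · subst hmL
          rw [if_neg hm0, if_pos rfl, if_neg hm0, if_pos rfl, zero_add]
        · rw [if_neg hm0, if_neg hmL, if_neg hm0, if_neg hmL, zero_mul, add_zero]
    rw [Finset.sum_congr rfl fun m _ => step m, Finset.sum_add_distrib,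
      Finset.sum_ite_eq' Finset.univ i0 (fun _ => a * k₂ i0 j),
      Finset.sum_ite_eq' Finset.univ iL (fun _ => b * k₂ iL j),
      if_pos (Finset.mem_univ _), if_pos (Finset.mem_univ _), hk₂0 j, hk₂L j]
    by_cases hj0 : j = i0
    · subst hj0
      rw [if_pos rfl, if_pos rfl, if_pos rfl]
      exact hact1
    · by_cases hjL : j = iL
      · subst hjL
        rw [if_neg hj0, if_neg hj0, if_neg hj0, if_pos rfl, if_pos rfl, if_pos rfl]
        exact hact2
      · rw [if_neg hj0, if_neg hjL, if_neg hj0, if_neg hjL, if_neg hj0, if_neg hjL]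
        ring
  have hGunit : IsUnit G := g.isUnit
  have hk₁unit : IsUnit k₁ := isUnit_of_inOpq p q hk₁O
  have hk₂unit : IsUnit k₂ := isUnit_of_inOpq p q hk₂O
  have hMunit : IsUnit M := (hGunit.mul hk₁unit).mul hk₂unit
  have hMdet : IsUnit M.det := (Matrix.isUnit_iff_isUnit_det M).1 hMunit
  set T : Matrix (Fin (p + q)) (Fin (p + q)) ℝ := 1 + lam • single i0 iL (1:ℝ)
    with hT
  have hss : (lam • single i0 iL (1:ℝ)) * (lam • single i0 iL (1:ℝ)) = 0 := by
    rw [Matrix.smul_mul, Matrix.mul_smul,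
      Matrix.single_mul_single_of_ne _ _ _ _ (Ne.symm hne), smul_zero, smul_zero]
  have hTinv : T * (1 - lam • single i0 iL (1:ℝ)) = 1 := by
    rw [hT, add_mul, one_mul, mul_sub, mul_one, hss, sub_zero, sub_add_cancel]
  have hTunit : IsUnit T :=
    ⟨⟨T, 1 - lam • single i0 iL (1:ℝ), hTinv, mul_eq_one_comm.1 hTinv⟩, rfl⟩
  have hTrow : ∀ m, T i0 m = if m = i0 then 1 else if m = iL then lam else 0 := by
    intro m
    by_cases hm0 : m = i0
    · subst hm0
      simp [hT, Matrix.add_apply, Matrix.smul_apply, Matrix.one_apply,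
        Matrix.single, Matrix.of_apply, hne, Ne.symm hne]
    · by_cases hmL : m = iL
      · subst hmL
        simp [hT, Matrix.add_apply, Matrix.smul_apply, Matrix.one_apply,
          Matrix.single, Matrix.of_apply, hne, Ne.symm hne]
      · simp [hT, Matrix.add_apply, Matrix.smul_apply, Matrix.one_apply,
          Matrix.single, Matrix.of_apply, hm0, Ne.symm hm0, hmL, Ne.symm hmL]
  have hcT : ∀ m, M i0 m = c * T i0 m := by
    intro m
    rw [hMrow m, hTrow m]
    by_cases hm0 : m = i0
    · rw [if_pos hm0, if_pos hm0]; ring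
    · by_cases hmL : m = iL
      · rw [if_neg hm0, if_neg hm0, if_pos hmL, if_pos hmL]; ring
      · rw [if_neg hm0, if_neg hm0, if_neg hmL, if_neg hmL]; ring
  refine ⟨lam, hlam, T * M⁻¹, hTunit.mul ⟨⟨M⁻¹, M, Matrix.nonsing_inv_mul M hMdet, Matrix.mul_nonsing_inv M hMdet⟩, rfl⟩, ?_, k₁ * k₂, inOpq_mul p q hk₁O hk₂O, ?_⟩
  · intro j hj
    have hcalc : c * (T * M⁻¹) i0 j = 0 := by
      rw [Matrix.mul_apply, Finset.mul_sum]
      have : ∀ m : Fin (p + q), c * (T i0 m * M⁻¹ m j) = M i0 m * M⁻¹ m j := by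
        intro m
        rw [hcT m]
        ring
      rw [Finset.sum_congr rfl fun m _ => this m, ← Matrix.mul_apply,
        Matrix.mul_nonsing_inv M hMdet, Matrix.one_apply_ne hj.symm]
    rcases mul_eq_zero.1 hcalc with h | h
    · exact absurd h hc
    · exact h
  · have hfin : T * M⁻¹ * G * (k₁ * k₂) = T * (M⁻¹ * M) := by
      simp only [hM, mul_assoc]
    rw [hfin, Matrix.nonsing_inv_mul M hMdet, mul_one]
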